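/- Let F be a subfield of ℝ and a, b ∈ F with a < b. If f ∈ F[x] satisfies f(x) ≥ 0 for all x ∈ [a,b], then f = σ₀ + (x−a)σ₁ + (b−x)σ₂ + (x−a)(b−x)σ₃ with each σᵢ a finite sum of terms t·g², t ∈ F_{≥0}, g ∈ F[x]. -/

import Mathlib

open Polynomial

noncomputable def pev (F : Subfield ℝ) (f : F[X]) (x : ℝ) : ℝ := Polynomial.aeval x f

/-- `σ` is a finite sum of terms `t·g²` with `t ∈ F`, `t ≥ 0`, `g ∈ F[x]`. -/
def SumWtSq (F : Subfield ℝ) (σ : F[X]) : Prop :=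
  ∃ (n : ℕ) (t : Fin n → F) (g : Fin n → F[X]),
    (∀ i, (0:ℝ) ≤ (t i : ℝ)) ∧ σ = ∑ i, C (t i) * g i ^ 2

open Finset
set_option synthInstance.maxHeartbeats 1000000
set_option maxHeartbeats 1600000

namespace Aux
variable {F : Subfield ℝ}

lemma sws_zero : SumWtSq F 0 := ⟨0, ![], ![], by simp, by simp⟩

lemma sws_term {t : F} (ht : (0:ℝ) ≤ (t:ℝ)) (g : F[X]) : SumWtSq F (C t * g ^ 2) :=
  ⟨1, ![t], ![g], by simpa using ht, by simp⟩

lemma sws_add {σ τ : F[X]} (hσ : SumWtSq F σ) (hτ : SumWtSq F τ) : SumWtSq F (σ + τ) := by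
  obtain ⟨n, t, g, ht, rfl⟩ := hσ
  obtain ⟨m, s, h, hs, rfl⟩ := hτ
  refine ⟨n + m, Fin.append t s, Fin.append g h, ?_, ?_⟩
  · intro i
    rcases Nat.lt_or_ge i.1 n with hi | hi
    · have e : i = Fin.castAdd m (i.castLT hi) := by ext; simp
      rw [(congrArg (Fin.append t s) e).trans (Fin.append_left t s _)]; exact ht _
    · obtain ⟨j, rfl⟩ : ∃ j : Fin m, i = Fin.natAdd n j := by
        refine ⟨⟨i.1 - n, ?_⟩, ?_⟩
        · omega
        · ext; simp; omega
      rw [Fin.append_right]; exact hs _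
  · rw [Fin.sum_univ_add]
    congr 1
    · exact Finset.sum_congr rfl fun i _ => by rw [Fin.append_left, Fin.append_left]
    · exact Finset.sum_congr rfl fun i _ => by rw [Fin.append_right, Fin.append_right]

lemma sws_mul_sq {σ : F[X]} (hσ : SumWtSq F σ) (h : F[X]) : SumWtSq F (h ^ 2 * σ) := by
  obtain ⟨n, t, g, ht, rfl⟩ := hσ
  refine ⟨n, t, fun i => h * g i, ht, ?_⟩
  rw [Finset.mul_sum]
  exact Finset.sum_congr rfl fun i _ => by ring

/-- membership in the preordering generated by (X-a), (b-X) over weighted sums of squares -/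
def Tmem (F : Subfield ℝ) (a b : F) (f : F[X]) : Prop :=
  ∃ σ₀ σ₁ σ₂ σ₃ : F[X], SumWtSq F σ₀ ∧ SumWtSq F σ₁ ∧ SumWtSq F σ₂ ∧ SumWtSq F σ₃ ∧
      f = σ₀ + (X - C a) * σ₁ + (C b - X) * σ₂ + (X - C a) * (C b - X) * σ₃

variable {a b : F}

lemma Tmem_zero : Tmem F a b 0 :=
  ⟨0, 0, 0, 0, sws_zero, sws_zero, sws_zero, sws_zero, by ring⟩

lemma Tmem_add {f g : F[X]} (hf : Tmem F a b f) (hg : Tmem F a b g) : Tmem F a b (f + g) := by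
  obtain ⟨s0, s1, s2, s3, h0, h1, h2, h3, rfl⟩ := hf
  obtain ⟨r0, r1, r2, r3, k0, k1, k2, k3, rfl⟩ := hg
  exact ⟨s0 + r0, s1 + r1, s2 + r2, s3 + r3, sws_add h0 k0, sws_add h1 k1,
    sws_add h2 k2, sws_add h3 k3, by ring⟩

lemma Tmem_mul_sq {f : F[X]} (hf : Tmem F a b f) (h : F[X]) : Tmem F a b (h ^ 2 * f) := by
  obtain ⟨s0, s1, s2, s3, h0, h1, h2, h3, rfl⟩ := hf
  exact ⟨h^2*s0, h^2*s1, h^2*s2, h^2*s3, sws_mul_sq h0 h, sws_mul_sq h1 h,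
    sws_mul_sq h2 h, sws_mul_sq h3 h, by ring⟩

lemma Tmem_mul_Xa {f : F[X]} (hf : Tmem F a b f) : Tmem F a b ((X - C a) * f) := by
  obtain ⟨s0, s1, s2, s3, h0, h1, h2, h3, rfl⟩ := hf
  exact ⟨(X - C a)^2 * s1, s0, (X - C a)^2 * s3, s2, sws_mul_sq h1 _, h0,
    sws_mul_sq h3 _, h2, by ring⟩

lemma Tmem_mul_bX {f : F[X]} (hf : Tmem F a b f) : Tmem F a b ((C b - X) * f) := by
  obtain ⟨s0, s1, s2, s3, h0, h1, h2, h3, rfl⟩ := hf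
  exact ⟨(C b - X)^2 * s2, (C b - X)^2 * s3, s0, s1, sws_mul_sq h2 _, sws_mul_sq h3 _,
    h0, h1, by ring⟩

lemma Tmem_of_sws {f : F[X]} (hf : SumWtSq F f) : Tmem F a b f :=
  ⟨f, 0, 0, 0, hf, sws_zero, sws_zero, sws_zero, by ring⟩

lemma Tmem_term {t : F} (ht : (0:ℝ) ≤ (t:ℝ)) (k m : ℕ) :
    Tmem F a b (C t * (X - C a) ^ k * (C b - X) ^ m) := by
  rcases Nat.even_or_odd k with ⟨k1, hk⟩ | ⟨k1, hk⟩ <;>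
    rcases Nat.even_or_odd m with ⟨m1, hm⟩ | ⟨m1, hm⟩ <;> subst hk hm
  · exact Tmem_of_sws (by
      have := sws_term ht ((X - C a)^k1 * (C b - X)^m1)
      convert this using 1; ring)
  · have : C t * (X - C a) ^ (k1+k1) * (C b - X) ^ (2*m1+1)
        = (C b - X) * (((X - C a)^k1 * (C b - X)^m1)^2 * (C t * 1^2)) := by ring
    rw [this]
    exact Tmem_mul_bX (Tmem_mul_sq (Tmem_of_sws (sws_term ht 1)) _)
  · have : C t * (X - C a) ^ (2*k1+1) * (C b - X) ^ (m1+m1)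
        = (X - C a) * (((X - C a)^k1 * (C b - X)^m1)^2 * (C t * 1^2)) := by ring
    rw [this]
    exact Tmem_mul_Xa (Tmem_mul_sq (Tmem_of_sws (sws_term ht 1)) _)
  · have : C t * (X - C a) ^ (2*k1+1) * (C b - X) ^ (2*m1+1)
        = (X - C a) * ((C b - X) * (((X - C a)^k1 * (C b - X)^m1)^2 * (C t * 1^2))) := by ring
    rw [this]
    exact Tmem_mul_Xa (Tmem_mul_bX (Tmem_mul_sq (Tmem_of_sws (sws_term ht 1)) _))

/-- If g ≥ 0 on [a,b] away from the (finitely many) roots of p, then g ≥ 0 on all of [a,b]. -/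
lemma NN (p g : ℝ[X]) (hp : p ≠ 0) {a b : ℝ} (hab : a < b)
    (h : ∀ x ∈ Set.Icc a b, p.eval x ≠ 0 → 0 ≤ g.eval x) :
    ∀ x ∈ Set.Icc a b, 0 ≤ g.eval x := by
  by_contra hcon
  push_neg at hcon
  obtain ⟨x₀, hx₀, hneg⟩ := hcon
  have hc := (Polynomial.continuous g).continuousAt (x := x₀)
  rw [Metric.continuousAt_iff] at hc
  obtain ⟨δ, hδ, hball⟩ := hc (-g.eval x₀) (by linarith)
  -- find a nondegenerate interval [c,d] ⊆ [a,b] ∩ ball(x₀,δ)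
  obtain ⟨c, d, hcd, hsub, hdist⟩ :
      ∃ c d : ℝ, c < d ∧ Set.Icc c d ⊆ Set.Icc a b ∧ ∀ y ∈ Set.Icc c d, |y - x₀| < δ := by
    rcases lt_or_eq_of_le hx₀.2 with hlt | heq
    · refine ⟨x₀, min b (x₀ + δ/2), by simp [hlt, hδ], ?_, ?_⟩
      · intro y hy
        exact ⟨le_trans hx₀.1 hy.1, le_trans hy.2 (min_le_left _ _)⟩
      · intro y hy
        have h1 : y ≤ x₀ + δ/2 := le_trans hy.2 (min_le_right _ _)
        have h2 : x₀ ≤ y := hy.1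
        rw [abs_lt]; constructor <;> linarith
    · refine ⟨max a (b - δ/2), b, by simp [hab, hδ], ?_, ?_⟩
      · intro y hy
        exact ⟨le_trans (le_max_left _ _) hy.1, hy.2⟩
      · intro y hy
        have h1 : b - δ/2 ≤ y := le_trans (le_max_right _ _) hy.1
        have h2 : y ≤ b := hy.2
        subst heq
        rw [abs_lt]; constructor <;> linarith
  have hfin : {x : ℝ | p.IsRoot x}.Finite := Polynomial.finite_setOf_isRoot hp
  have hinf : (Set.Icc c d).Infinite := Set.Icc_infinite hcd
  obtain ⟨y, hy⟩ := (hinf.diff hfin).nonempty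
  have hyIcc : y ∈ Set.Icc c d := hy.1
  have hyroot : p.eval y ≠ 0 := fun hr => hy.2 hr
  have hyge : 0 ≤ g.eval y := h y (hsub hyIcc) hyroot
  have := hball (show dist y x₀ < δ by rw [Real.dist_eq]; exact hdist y hyIcc)
  rw [Real.dist_eq, abs_lt] at this
  linarith [this.2]

lemma pev_eq (f : F[X]) (x : ℝ) : pev F f x = (f.map (algebraMap F ℝ)).eval x := by
  rw [pev, aeval_def, eval_map]

lemma pev_continuous (f : F[X]) : Continuous (pev F f) := by
  have : pev F f = fun x => (f.map (algebraMap F ℝ)).eval x := funext (pev_eq f)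
  rw [this]
  exact Polynomial.continuous _

lemma pev_sum (x : ℝ) {α : Type*} (s : Finset α) (g : α → F[X]) :
    pev F (∑ i ∈ s, g i) x = ∑ i ∈ s, pev F (g i) x := by
  simp [pev, map_sum]

lemma pev_eval_sum_range (w : F[X]) (x : ℝ) :
    pev F w x = ∑ j ∈ range (w.natDegree + 1), (w.coeff j : ℝ) * x ^ j := by
  rw [pev, Polynomial.aeval_eq_sum_range]
  exact Finset.sum_congr rfl fun j _ => by rw [Algebra.smul_def]; rfl

lemma pev_mul (f g : F[X]) (x : ℝ) : pev F (f * g) x = pev F f x * pev F g x := by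
  simp [pev]
lemma pev_Xa (x : ℝ) : pev F (X - C a) x = x - (a:ℝ) := by
  simp [pev]; rfl
lemma pev_bX (x : ℝ) : pev F (C b - X) x = (b:ℝ) - x := by
  simp [pev]; rfl
lemma pev_coe (f : F[X]) (c : F) : pev F f ((c:ℝ)) = ((f.eval c : F) : ℝ) := by
  rw [pev, show ((c:ℝ)) = algebraMap F ℝ c from rfl, aeval_algebraMap_apply]
  simp
  rfl

/-- degree elevation identity in a commutative ring -/
lemma lemA {R : Type*} [CommRing R] (x y : R) (hxy : x + y = 1) (d N : ℕ) (hdN : d ≤ N)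
    (a : ℕ → R) :
    (∑ j ∈ range (d+1), a j * x^j) =
    ∑ k ∈ range (N+1),
      (∑ j ∈ range (d+1), if j ≤ k then a j * ((N-j).choose (k-j) : R) else 0) * x^k * y^(N-k) := by
  simp only [Finset.sum_mul, ite_mul, zero_mul]
  rw [Finset.sum_comm]
  refine Finset.sum_congr rfl fun j hj => ?_
  rw [Finset.mem_range] at hj
  have hjN : j ≤ N := by omega
  rw [← Finset.sum_filter]
  have hfil : (range (N+1)).filter (fun k => j ≤ k) = Finset.Ico j (N+1) := by
    ext k; simp [Finset.mem_Ico, Finset.mem_filter, Finset.mem_range]; omega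
  rw [hfil, Finset.sum_Ico_eq_sum_range]
  have h2 : N + 1 - j = (N - j) + 1 := by omega
  rw [h2]
  have h3 : ∀ i ∈ range ((N-j)+1),
      a j * ((N-j).choose (j+i-j) : R) * x^(j+i) * y^(N-(j+i))
      = (a j * x^j) * (x^i * y^((N-j)-i) * ((N-j).choose i : R)) := by
    intro i hi
    rw [Finset.mem_range] at hi
    have e1 : j + i - j = i := by omega
    have e2 : N - (j+i) = (N-j) - i := by omega
    rw [e1, e2, pow_add]; ring
  rw [Finset.sum_congr rfl h3, ← Finset.mul_sum, ← add_pow, hxy, one_pow, mul_one]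

/-- ratio of binomial coefficients as a product -/
lemma ratio (N k : ℕ) (hk : k ≤ N) :
    ∀ j, j ≤ k → j < N →
    ((N-j).choose (k-j) : ℝ) = (N.choose k : ℝ) * ∏ i ∈ range j, (((k:ℝ)-i)/((N:ℝ)-i)) := by
  intro j
  induction j with
  | zero => simp
  | succ j ih =>
    intro hjk hjN
    have h1 : ((N-j).choose (k-j) : ℝ) = (N.choose k : ℝ) * ∏ i ∈ range j, (((k:ℝ)-i)/((N:ℝ)-i)) :=
      ih (by omega) (by omega)
    have key : (N - j) * (N-(j+1)).choose (k-(j+1)) = (N-j).choose (k-j) * (k - j) := by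
      have e1 : N - j = (N - (j+1)) + 1 := by omega
      have e2 : k - j = (k - (j+1)) + 1 := by omega
      rw [e1, e2, ← Nat.add_one_mul_choose_eq]
    have hNj : (0:ℝ) < (N:ℝ) - j := by
      have : j < N := by omega
      have := Nat.cast_lt (α := ℝ).2 this
      linarith
    have keyR : ((N:ℝ) - j) * ((N-(j+1)).choose (k-(j+1)) : ℝ)
        = ((N-j).choose (k-j) : ℝ) * ((k:ℝ) - j) := by
      have h2 := congrArg (fun n : ℕ => (n : ℝ)) key
      simp only [Nat.cast_mul] at h2
      rw [Nat.cast_sub (by omega : j ≤ N), Nat.cast_sub (by omega : j ≤ k)] at h2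
      exact h2
    have : ((N-(j+1)).choose (k-(j+1)) : ℝ) = ((N-j).choose (k-j) : ℝ) * (((k:ℝ)-j)/((N:ℝ)-j)) := by
      field_simp
      linarith [keyR]
    rw [this, h1, Finset.prod_range_succ]
    ring

lemma pow_sub_le_mul {A B : ℝ} (hB : 0 ≤ B) (hBA : B ≤ A) (hA : A ≤ 1) :
    ∀ j : ℕ, A^j - B^j ≤ j * (A - B) := by
  intro j
  induction j with
  | zero => simp
  | succ j ih =>
    have hAnn : 0 ≤ A := le_trans hB hBA
    have h1 : A^(j+1) - B^(j+1) = A * (A^j - B^j) + B^j * (A - B) := by ring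
    have h2 : A * (A^j - B^j) ≤ A^j - B^j := by
      nlinarith [pow_le_pow_left₀ hB hBA j, pow_nonneg hB j]
    have h3 : B^j * (A - B) ≤ 1 * (A - B) := by
      have : B^j ≤ 1 := pow_le_one₀ hB (le_trans hBA hA)
      nlinarith
    push_cast
    nlinarith

lemma prod_bound (N k j : ℕ) (hjk : j ≤ k) (hkN : k ≤ N) (hjN : j ≤ N) (hN : 0 < N) :
    (0 ≤ ∏ i ∈ range j, (((k:ℝ)-i)/((N:ℝ)-i))) ∧
    (((k:ℝ)/N - (j:ℝ)/N)^j ≤ ∏ i ∈ range j, (((k:ℝ)-i)/((N:ℝ)-i))) ∧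
    (∏ i ∈ range j, (((k:ℝ)-i)/((N:ℝ)-i)) ≤ ((k:ℝ)/N)^j) := by
  have hNr : (0:ℝ) < N := by exact_mod_cast hN
  have hfact : ∀ i ∈ range j, (0:ℝ) ≤ ((k:ℝ)-i)/((N:ℝ)-i) := by
    intro i hi
    rw [Finset.mem_range] at hi
    have hik : (i:ℝ) ≤ k := by
      have : i ≤ k := by omega
      exact_mod_cast this
    have hiN : (i:ℝ) < N := by
      have : i < N := by omega
      exact_mod_cast this
    apply div_nonneg <;> linarith
  refine ⟨Finset.prod_nonneg hfact, ?_, ?_⟩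
  · have hjk' : (j:ℝ) ≤ k := by exact_mod_cast hjk
    have hB0 : (0:ℝ) ≤ (k:ℝ)/N - (j:ℝ)/N := by
      rw [sub_nonneg]
      gcongr
    calc ((k:ℝ)/N - (j:ℝ)/N)^j = ∏ _i ∈ range j, ((k:ℝ)/N - (j:ℝ)/N) := by
          rw [Finset.prod_const, Finset.card_range]
      _ ≤ ∏ i ∈ range j, (((k:ℝ)-i)/((N:ℝ)-i)) := by
          apply Finset.prod_le_prod
          · intro i _
            exact hB0
          · intro i hi
            rw [Finset.mem_range] at hi
            have hiN : (i:ℝ) < N := by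
              have : i < N := by omega
              exact_mod_cast this
            have hij : (i:ℝ) ≤ j := by
              have : i ≤ j := by omega
              exact_mod_cast this
            have hkN' : (k:ℝ) ≤ N := by exact_mod_cast hkN
            rw [div_sub_div_same, div_le_div_iff₀ hNr (by linarith)]
            nlinarith
  · calc ∏ i ∈ range j, (((k:ℝ)-i)/((N:ℝ)-i)) ≤ ∏ _i ∈ range j, ((k:ℝ)/N) := by
          apply Finset.prod_le_prod hfact
          intro i hi
          rw [Finset.mem_range] at hi
          have hiN : (i:ℝ) < N := by
            have : i < N := by omega
            exact_mod_cast this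
          have hik : (i:ℝ) ≤ k := by
            have : i ≤ k := by omega
            exact_mod_cast this
          have hkN' : (k:ℝ) ≤ N := by exact_mod_cast hkN
          rw [div_le_div_iff₀ (by linarith) hNr]
          nlinarith [Nat.cast_nonneg (α := ℝ) i]
      _ = ((k:ℝ)/N)^j := by rw [Finset.prod_const, Finset.card_range]

/-- main estimate: the (normalized) Bernstein coefficient factor is within j²/N of (k/N)^j -/
lemma rho_est (N k j : ℕ) (hkN : k ≤ N) (hjN : j < N) :
    |(if j ≤ k then ∏ i ∈ range j, (((k:ℝ)-i)/((N:ℝ)-i)) else 0) - ((k:ℝ)/N)^j|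
      ≤ (j:ℝ)^2 / N := by
  have hN : 0 < N := by omega
  have hNr : (0:ℝ) < N := by exact_mod_cast hN
  have hkN' : (k:ℝ) ≤ N := by exact_mod_cast hkN
  have hk0 : (0:ℝ) ≤ k := Nat.cast_nonneg k
  have hkN1 : (k:ℝ)/N ≤ 1 := by rw [div_le_one hNr]; exact hkN'
  have hkN0 : (0:ℝ) ≤ (k:ℝ)/N := by positivity
  split
  · rename_i hjk
    obtain ⟨h0, hlo, hhi⟩ := prod_bound N k j hjk hkN (by omega) hN
    rw [abs_sub_le_iff]
    constructor
    · -- prod - (k/N)^j ≤ j²/N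
      have : (0:ℝ) ≤ (j:ℝ)^2/N := by positivity
      linarith
    · -- (k/N)^j - prod ≤ j²/N
      have hjk' : (j:ℝ) ≤ k := by exact_mod_cast hjk
      have hB0 : (0:ℝ) ≤ (k:ℝ)/N - (j:ℝ)/N := by
        rw [sub_nonneg]; gcongr
      have hBA : (k:ℝ)/N - (j:ℝ)/N ≤ (k:ℝ)/N := by
        have : (0:ℝ) ≤ (j:ℝ)/N := by positivity
        linarith
      have hkey := pow_sub_le_mul hB0 hBA hkN1 j
      have : ((k:ℝ)/N) - ((k:ℝ)/N - (j:ℝ)/N) = (j:ℝ)/N := by ring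
      rw [this] at hkey
      have : (j:ℝ) * ((j:ℝ)/N) = (j:ℝ)^2/N := by ring
      rw [this] at hkey
      linarith
  · rename_i hjk
    push_neg at hjk
    -- k < j : term is 0, need (k/N)^j ≤ j²/N
    have hj1 : 1 ≤ j := by omega
    have h1 : ((k:ℝ)/N)^j ≤ ((k:ℝ)/N)^1 := pow_le_pow_of_le_one hkN0 hkN1 hj1
    have hjr : (1:ℝ) ≤ (j:ℝ) := by exact_mod_cast hj1
    have hkj : (k:ℝ) ≤ j := by
      have : k ≤ j := by omega
      exact_mod_cast this
    rw [zero_sub, abs_neg, abs_of_nonneg (by positivity)]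
    calc ((k:ℝ)/N)^j ≤ ((k:ℝ)/N)^1 := h1
      _ = (k:ℝ)/N := pow_one _
      _ ≤ (j:ℝ)^2/N := by gcongr; nlinarith
    


lemma bernstein (w : F[X]) (hw : ∀ x : ℝ, 0 ≤ x → x ≤ 1 → 0 < pev F w x) :
    ∃ N : ℕ, ∃ e : ℕ → F, (∀ k, k ≤ N → (0:ℝ) ≤ (e k : ℝ)) ∧
      w = ∑ k ∈ range (N+1), C (e k) * X^k * (1 - X)^(N-k) := by
  set d := w.natDegree with hd
  -- minimum of w on [0,1]
  obtain ⟨x₀, hx₀, hmin⟩ := isCompact_Icc.exists_isMinOn (Set.nonempty_Icc.2 zero_le_one)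
    (pev_continuous w).continuousOn
  set ε : ℝ := pev F w x₀ with hε
  have hεpos : 0 < ε := hw x₀ hx₀.1 hx₀.2
  have hminle : ∀ y ∈ Set.Icc (0:ℝ) 1, ε ≤ pev F w y := fun y hy => hmin hy
  set M : ℝ := ∑ j ∈ range (d+1), |(w.coeff j : ℝ)| * (j:ℝ)^2 with hM
  have hM0 : 0 ≤ M := Finset.sum_nonneg fun j _ => by positivity
  obtain ⟨N₀, hN₀⟩ := exists_nat_gt (M / ε)
  set N : ℕ := N₀ + d + 1 with hN
  have hdN : d < N := by omega
  have hNpos : 0 < N := by omega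
  have hNR : (0:ℝ) < N := by exact_mod_cast hNpos
  have hMN : M / (N:ℝ) < ε := by
    rw [div_lt_iff₀ hNR]
    have h1 : M / ε < (N:ℝ) := by
      have : (N₀:ℝ) ≤ (N:ℝ) := by exact_mod_cast (by omega : N₀ ≤ N)
      linarith
    calc M = (M / ε) * ε := by field_simp
      _ < (N:ℝ) * ε := by exact mul_lt_mul_of_pos_right h1 hεpos
      _ = ε * N := by ring
  set e : ℕ → F := fun k => ∑ j ∈ range (d+1),
    if j ≤ k then w.coeff j * ((N-j).choose (k-j) : F) else 0 with he
  refine ⟨N, e, ?_, ?_⟩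
  · -- positivity
    intro k hkN
    have hcoe : ((e k : ℝ)) = ∑ j ∈ range (d+1),
        if j ≤ k then (w.coeff j : ℝ) * ((N-j).choose (k-j) : ℝ) else 0 := by
      rw [he]
      push_cast
      exact Finset.sum_congr rfl fun j _ => by split <;> push_cast <;> ring
    have hsplit : ∀ j ∈ range (d+1),
        (if j ≤ k then (w.coeff j : ℝ) * ((N-j).choose (k-j) : ℝ) else 0)
        = (N.choose k : ℝ) * ((w.coeff j : ℝ) *
            (if j ≤ k then ∏ i ∈ range j, (((k:ℝ)-i)/((N:ℝ)-i)) else 0)) := by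
      intro j hj
      rw [Finset.mem_range] at hj
      split
      · rename_i hjk
        rw [ratio N k hkN j hjk (by omega)]
        ring
      · ring
    rw [hcoe, Finset.sum_congr rfl hsplit, ← Finset.mul_sum]
    set v : ℝ := ∑ j ∈ range (d+1), (w.coeff j : ℝ) *
        (if j ≤ k then ∏ i ∈ range j, (((k:ℝ)-i)/((N:ℝ)-i)) else 0) with hv
    have hvpos : 0 < v := by
      have hxk : (k:ℝ)/N ∈ Set.Icc (0:ℝ) 1 := by
        constructor
        · positivity
        · rw [div_le_one hNR]; exact_mod_cast hkN
      have hwk : ε ≤ pev F w ((k:ℝ)/N) := hminle _ hxk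
      have hest : |v - pev F w ((k:ℝ)/N)| ≤ M / N := by
        rw [pev_eval_sum_range w ((k:ℝ)/N), ← hd, ← Finset.sum_sub_distrib]
        calc |∑ j ∈ range (d+1), ((w.coeff j : ℝ) *
                (if j ≤ k then ∏ i ∈ range j, (((k:ℝ)-i)/((N:ℝ)-i)) else 0)
              - (w.coeff j : ℝ) * ((k:ℝ)/N)^j)|
            ≤ ∑ j ∈ range (d+1), |(w.coeff j : ℝ)| * ((j:ℝ)^2 / N) := by
              refine (Finset.abs_sum_le_sum_abs _ _).trans (Finset.sum_le_sum fun j hj => ?_)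
              rw [Finset.mem_range] at hj
              rw [← mul_sub, abs_mul]
              exact mul_le_mul_of_nonneg_left (rho_est N k j hkN (by omega)) (abs_nonneg _)
          _ = M / N := by rw [hM, Finset.sum_div]; exact Finset.sum_congr rfl fun j _ => by ring
      have := abs_le.1 hest
      have h2 : pev F w ((k:ℝ)/N) - M/N ≤ v := by linarith [this.2]
      linarith
    have : (0:ℝ) ≤ (N.choose k : ℝ) := by positivity
    positivity
  · -- the identity
    have hid := lemA (R := F[X]) X (1 - X) (by ring) d N (by omega) (fun j => C (w.coeff j))
    have hw0 : w = ∑ j ∈ range (d+1), C (w.coeff j) * X^j := by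
      conv_lhs => rw [w.as_sum_range' (d+1) (by omega)]
      exact Finset.sum_congr rfl fun j _ => (C_mul_X_pow_eq_monomial).symm
    rw [hw0, hid]
    refine Finset.sum_congr rfl fun k _ => ?_
    congr 1
    congr 1
    rw [he, map_sum]
    refine Finset.sum_congr rfl fun j _ => ?_
    rw [apply_ite Polynomial.C, map_mul, map_natCast, map_zero]

lemma Tmem_sum {α : Type*} (s : Finset α) (g : α → F[X]) (h : ∀ i ∈ s, Tmem F a b (g i)) :
    Tmem F a b (∑ i ∈ s, g i) := by
  classical
  induction s using Finset.induction with
  | empty => simpa using Tmem_zero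
  | insert x s' hx ih =>
    rw [Finset.sum_insert hx]
    exact Tmem_add (h x (Finset.mem_insert_self x s'))
      (ih fun i hi => h i (Finset.mem_insert_of_mem hi))

lemma Tmem_of_pos (hab : (a:ℝ) < (b:ℝ)) (f : F[X])
    (hf : ∀ x : ℝ, (a:ℝ) ≤ x → x ≤ (b:ℝ) → 0 < pev F f x) : Tmem F a b f := by
  have hba : ((b - a : F) : ℝ) = (b:ℝ) - (a:ℝ) := by push_cast; ring
  have hbaR : (0:ℝ) < ((b - a : F) : ℝ) := by rw [hba]; linarith
  have hba0 : (b - a : F) ≠ 0 := fun h => by rw [h] at hbaR; simp at hbaR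
  set w : F[X] := f.comp (C a + C (b - a) * X) with hw
  have hwval : ∀ x : ℝ, pev F w x = pev F f ((a:ℝ) + ((b:ℝ) - (a:ℝ)) * x) := by
    intro x
    rw [hw, pev, aeval_comp]
    have : (aeval x) (C a + C (b - a) * X) = (a:ℝ) + ((b:ℝ) - (a:ℝ)) * x := by
      simp only [map_add, map_mul, aeval_C, aeval_X]
      rw [show (algebraMap (↥F) ℝ) (b - a) = ((b - a : F) : ℝ) from rfl, hba]
      rfl
    rw [this]
    rfl
  have hwpos : ∀ x : ℝ, 0 ≤ x → x ≤ 1 → 0 < pev F w x := by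
    intro x hx0 hx1
    rw [hwval]
    exact hf _ (by nlinarith) (by nlinarith)
  obtain ⟨N, e, he, hid⟩ := bernstein w hwpos
  have hCC : (C (b - a) : F[X]) * C ((b - a)⁻¹) = 1 := by
    rw [← C_mul, mul_inv_cancel₀ hba0, C_1]
  have hcompX : (C a + C (b - a) * X).comp (C ((b - a)⁻¹) * (X - C a)) = X := by
    simp only [add_comp, mul_comp, C_comp, X_comp]
    rw [← mul_assoc, hCC]
    ring
  have hfw : f = w.comp (C ((b - a)⁻¹) * (X - C a)) := by
    rw [hw, comp_assoc, hcompX, comp_X]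
  have hone : (1 : F[X]) - C ((b - a)⁻¹) * (X - C a) = C ((b - a)⁻¹) * (C b - X) := by
    have h3 : (C (b - a) : F[X]) = C b - C a := map_sub C b a
    linear_combination C ((b - a)⁻¹) * h3 - hCC
  rw [hfw, hid]
  have hcomp_sum : (∑ k ∈ range (N+1), C (e k) * X^k * (1 - X)^(N-k)).comp
      (C ((b - a)⁻¹) * (X - C a))
      = ∑ k ∈ range (N+1), (C (e k) * (C ((b - a)⁻¹) * (X - C a))^k *
          (C ((b - a)⁻¹) * (C b - X))^(N-k)) := by
    rw [← hone]
    simp only [Polynomial.comp, eval₂_finset_sum]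
    refine Finset.sum_congr rfl fun k _ => ?_
    simp [eval₂_mul, eval₂_pow, eval₂_sub, eval₂_one]
  rw [hcomp_sum]
  apply Tmem_sum
  intro k hk
  rw [Finset.mem_range] at hk
  have heq : C (e k) * (C ((b - a)⁻¹) * (X - C a))^k * (C ((b - a)⁻¹) * (C b - X))^(N-k)
      = C (e k * ((b-a)⁻¹)^k * ((b-a)⁻¹)^(N-k)) * (X - C a)^k * (C b - X)^(N-k) := by
    simp only [map_mul, map_pow, mul_pow]
    ring
  rw [heq]
  apply Tmem_term
  have h1 : (0:ℝ) ≤ ((( (b-a)⁻¹ : F)) : ℝ) := by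
    have : (((b-a)⁻¹ : F) : ℝ) = (((b-a):F):ℝ)⁻¹ := by push_cast; ring
    rw [this]
    positivity
  have h2 := he k (by omega)
  push_cast
  positivity

lemma main (hab : (a:ℝ) < (b:ℝ)) :
    ∀ n : ℕ, ∀ f : F[X], f.natDegree ≤ n →
    (∀ x : ℝ, (a:ℝ) ≤ x → x ≤ (b:ℝ) → 0 ≤ pev F f x) → Tmem F a b f := by
  intro n
  induction n using Nat.strong_induction_on with
  | _ n IH =>
  intro f hdeg hf
  by_cases hf0 : f = 0
  · subst hf0; exact Tmem_zero
  by_cases hA : f.eval a = 0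
  · -- root at a
    have hdim : 1 ≤ f.natDegree := by
      rcases Nat.eq_zero_or_pos f.natDegree with h0 | h1
      · exfalso
        have hc := Polynomial.eq_C_of_natDegree_eq_zero h0
        rw [hc, eval_C] at hA
        exact hf0 (by rw [hc, hA, map_zero])
      · exact h1
    obtain ⟨f₁, hf₁⟩ := dvd_iff_isRoot.2 hA
    have hXa : (X - C a : F[X]) ≠ 0 := X_sub_C_ne_zero a
    have hf₁0 : f₁ ≠ 0 := fun h => hf0 (by rw [hf₁, h, mul_zero])
    have hdeg1 : f.natDegree = 1 + f₁.natDegree := by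
      rw [hf₁, Polynomial.natDegree_mul hXa hf₁0, natDegree_X_sub_C]
    have key : ∀ x ∈ Set.Icc (a:ℝ) (b:ℝ), 0 ≤ (f₁.map (algebraMap F ℝ)).eval x := by
      apply NN (X - C (a:ℝ)) _ (X_sub_C_ne_zero _) hab
      intro x hx hne
      simp only [eval_sub, eval_X, eval_C] at hne
      have hgt : (a:ℝ) < x := lt_of_le_of_ne hx.1 (fun h => hne (by rw [← h]; ring))
      have h0 := hf x hx.1 hx.2
      rw [hf₁, pev_mul, pev_Xa] at h0
      rw [← pev_eq]
      nlinarith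
    have hT1 : Tmem F a b f₁ := by
      apply IH (n - 1) (by omega) f₁ (by omega)
      intro x hx1 hx2
      rw [pev_eq]
      exact key x ⟨hx1, hx2⟩
    rw [hf₁]
    exact Tmem_mul_Xa hT1
  by_cases hB : f.eval b = 0
  · -- root at b
    have hdim : 1 ≤ f.natDegree := by
      rcases Nat.eq_zero_or_pos f.natDegree with h0 | h1
      · exfalso
        have hc := Polynomial.eq_C_of_natDegree_eq_zero h0
        rw [hc, eval_C] at hB
        exact hf0 (by rw [hc, hB, map_zero])
      · exact h1
    obtain ⟨q, hq⟩ := dvd_iff_isRoot.2 hB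
    set f₁ : F[X] := -q with hf₁def
    have hf₁ : f = (C b - X) * f₁ := by rw [hq, hf₁def]; ring
    have hbX : (C b - X : F[X]) ≠ 0 := by
      intro h
      have := X_sub_C_ne_zero (R := F) b
      apply this
      have : (X - C b : F[X]) = -(C b - X) := by ring
      rw [this, h]; ring
    have hf₁0 : f₁ ≠ 0 := fun h => hf0 (by rw [hf₁, h, mul_zero])
    have hdeg1 : f.natDegree = 1 + f₁.natDegree := by
      rw [hf₁, Polynomial.natDegree_mul hbX hf₁0]
      congr 1
      have : (C b - X : F[X]) = -(X - C b) := by ring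
      rw [this, natDegree_neg, natDegree_X_sub_C]
    have key : ∀ x ∈ Set.Icc (a:ℝ) (b:ℝ), 0 ≤ (f₁.map (algebraMap F ℝ)).eval x := by
      apply NN (X - C (b:ℝ)) _ (X_sub_C_ne_zero _) hab
      intro x hx hne
      simp only [eval_sub, eval_X, eval_C] at hne
      have hlt : x < (b:ℝ) := lt_of_le_of_ne hx.2 (fun h => hne (by rw [h]; ring))
      have h0 := hf x hx.1 hx.2
      rw [hf₁, pev_mul, pev_bX] at h0
      rw [← pev_eq]
      nlinarith
    have hT1 : Tmem F a b f₁ := by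
      apply IH (n - 1) (by omega) f₁ (by omega)
      intro x hx1 hx2
      rw [pev_eq]
      exact key x ⟨hx1, hx2⟩
    rw [hf₁]
    exact Tmem_mul_bX hT1
  by_cases hC : ∃ r : ℝ, (a:ℝ) < r ∧ r < (b:ℝ) ∧ (f.map (algebraMap F ℝ)).eval r = 0
  · -- interior root
    obtain ⟨r, hra, hrb, hr⟩ := hC
    have haev : Polynomial.aeval r f = 0 := by rw [aeval_def, ← eval_map]; exact hr
    have halg : IsIntegral F r := (IsAlgebraic.isIntegral ⟨f, hf0, haev⟩)
    set p := minpoly F r with hpdef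
    have hp0 : p ≠ 0 := minpoly.ne_zero halg
    have hpdeg : 1 ≤ p.natDegree := minpoly.natDegree_pos halg
    obtain ⟨q, hq⟩ := minpoly.dvd F r haev
    have hq0 : q ≠ 0 := fun h => hf0 (by rw [hq, h, mul_zero])
    have hlocmin : IsLocalMin (fun x => (f.map (algebraMap F ℝ)).eval x) r := by
      have hmem : Set.Ioo (a:ℝ) (b:ℝ) ∈ nhds r := isOpen_Ioo.mem_nhds ⟨hra, hrb⟩
      refine Filter.eventually_of_mem hmem fun x hx => ?_
      simp only
      rw [hr]
      have := hf x (le_of_lt hx.1) (le_of_lt hx.2)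
      rw [pev_eq] at this
      exact this
    have hderiv0 : (f.map (algebraMap F ℝ)).derivative.eval r = 0 :=
      hlocmin.hasDerivAt_eq_zero (Polynomial.hasDerivAt _ r)
    have hp'ne : Polynomial.aeval r (derivative p) ≠ 0 := by
      intro h0
      have hdvd2 : p ∣ derivative p := minpoly.dvd F r h0
      have hd0 : derivative p ≠ 0 := by
        intro hd
        have := natDegree_eq_zero_of_derivative_eq_zero hd
        omega
      have h1 := Polynomial.natDegree_le_of_dvd hdvd2 hd0
      have h2 := Polynomial.natDegree_derivative_lt (show p.natDegree ≠ 0 by omega)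
      omega
    have hqr : Polynomial.aeval r q = 0 := by
      have e1 : (f.map (algebraMap F ℝ)) = (p.map (algebraMap F ℝ)) * (q.map (algebraMap F ℝ)) := by
        rw [hq, Polynomial.map_mul]
      have e3 : (p.map (algebraMap F ℝ)).eval r = 0 := by
        have := minpoly.aeval F r
        rwa [aeval_def, ← eval_map] at this
      have e2 := hderiv0
      rw [e1, derivative_mul] at e2
      simp only [eval_add, eval_mul, e3, mul_zero, zero_mul, add_zero] at e2
      rw [show derivative (p.map (algebraMap F ℝ)) = (derivative p).map (algebraMap F ℝ) from
        (derivative_map p _), eval_map, ← aeval_def] at e2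
      rcases mul_eq_zero.1 e2 with h | h
      · exact absurd h hp'ne
      · rw [aeval_def, ← eval_map]
        exact h
    obtain ⟨q₁, hq₁⟩ := minpoly.dvd F r hqr
    have hff : f = p^2 * q₁ := by rw [hq, hq₁]; ring
    have hq₁0 : q₁ ≠ 0 := fun h => hf0 (by rw [hff, h, mul_zero])
    have hdegf : f.natDegree = 2 * p.natDegree + q₁.natDegree := by
      rw [hff, Polynomial.natDegree_mul (pow_ne_zero 2 hp0) hq₁0, natDegree_pow]
    have hpR0 : (p.map (algebraMap F ℝ)) ≠ 0 := Polynomial.map_ne_zero hp0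
    have key : ∀ x ∈ Set.Icc (a:ℝ) (b:ℝ), 0 ≤ (q₁.map (algebraMap F ℝ)).eval x := by
      apply NN (p.map (algebraMap F ℝ)) _ hpR0 hab
      intro x hx hne
      have h0 := hf x hx.1 hx.2
      rw [show f = p * (p * q₁) by rw [hff]; ring, pev_mul, pev_mul] at h0
      rw [← pev_eq]
      have hpx : pev F p x ≠ 0 := by rw [pev_eq]; exact hne
      have h1 : 0 < pev F p x * pev F p x := mul_self_pos.2 hpx
      nlinarith
    have hT1 : Tmem F a b q₁ := by
      apply IH q₁.natDegree (by omega) q₁ le_rfl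
      intro x hx1 hx2
      rw [pev_eq]
      exact key x ⟨hx1, hx2⟩
    rw [hff]
    exact Tmem_mul_sq hT1 p
  · -- strictly positive
    push_neg at hC
    apply Tmem_of_pos hab
    intro x hx1 hx2
    rcases lt_or_eq_of_le (hf x hx1 hx2) with h | h
    · exact h
    exfalso
    rcases eq_or_lt_of_le hx1 with hxa | hxa
    · apply hA
      subst hxa
      have h2 : ((f.eval a : F) : ℝ) = 0 := by rw [← pev_coe]; exact h.symm
      exact_mod_cast h2
    rcases eq_or_lt_of_le hx2 with hxb | hxb
    · apply hB
      subst hxb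
      have h2 : ((f.eval b : F) : ℝ) = 0 := by rw [← pev_coe]; exact h.symm
      exact_mod_cast h2
    · exact absurd (hC x hxa hxb) (fun hcc => hcc (by rw [← pev_eq, ← h]))
end Aux

theorem stmt3 (F : Subfield ℝ) (a b : F) (hab : (a:ℝ) < (b:ℝ)) (f : F[X])
    (hf : ∀ x : ℝ, (a:ℝ) ≤ x → x ≤ (b:ℝ) → 0 ≤ pev F f x) :
    ∃ σ₀ σ₁ σ₂ σ₃ : F[X], SumWtSq F σ₀ ∧ SumWtSq F σ₁ ∧ SumWtSq F σ₂ ∧ SumWtSq F σ₃ ∧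
      f = σ₀ + (X - C a) * σ₁ + (C b - X) * σ₂ + (X - C a) * (C b - X) * σ₃ := by
  exact Aux.main hab f.natDegree f le_rfl hf
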